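/- Fix an integer $n \geq 2$. Then there exist constants $C > 0$ and $x_0 > 1$ such that for all real $x \geq x_0$, $\left| \sum_{q=1}^{\lfloor x \rfloor} \binom{q+n-2}{n-2} \sum_{p=1}^{\lfloor x/q \rfloor} \binom{p}{n-1} - \left(\frac{1}{n!}\sum_{q=1}^{\lfloor x \rfloor} q^{-n}\binom{q+n-2}{n-2}\right) x^{n} \right| \leq C\, x^{n-1} \ln x$. -/

import Mathlib

open Finset

lemma hockey (k m : ℕ) :
    ∑ p ∈ Finset.Icc 1 m, p.choose (k + 1) = (m + 1).choose (k + 2) := by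
  induction m with
  | zero => simp [Nat.choose_eq_zero_of_lt]
  | succ m ih =>
    rw [Finset.sum_Icc_succ_top (by omega), ih]
    have h := Nat.choose_succ_succ' (m + 1) (k + 1)
    simp only [show k + 1 + 1 = k + 2 from rfl] at h
    omega

lemma prod_sub_prod_le (M ε : ℝ) (hM : 0 ≤ M) (hε : 0 ≤ ε) :
    ∀ (k : ℕ) (a b : ℕ → ℝ), (∀ i < k, |a i| ≤ M) → (∀ i < k, |b i| ≤ M) →
      (∀ i < k, |a i - b i| ≤ ε) →
      |∏ i ∈ Finset.range k, a i - ∏ i ∈ Finset.range k, b i| ≤ k * ε * M ^ (k - 1) := by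
  intro k
  induction k with
  | zero => simp
  | succ k ih =>
    intro a b ha hb hab
    rw [Finset.prod_range_succ, Finset.prod_range_succ]
    have h1 : |∏ i ∈ Finset.range k, a i - ∏ i ∈ Finset.range k, b i| ≤ k * ε * M ^ (k - 1) :=
      ih a b (fun i hi => ha i (by omega)) (fun i hi => hb i (by omega))
        (fun i hi => hab i (by omega))
    have hbk : |∏ i ∈ Finset.range k, b i| ≤ M ^ k := by
      rw [Finset.abs_prod]
      calc ∏ i ∈ Finset.range k, |b i| ≤ ∏ i ∈ Finset.range k, M :=
            Finset.prod_le_prod (fun i _ => abs_nonneg _)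
              (fun i hi => hb i (by simp at hi; omega))
        _ = M ^ k := by simp
    have key : (∏ i ∈ Finset.range k, a i) * a k - (∏ i ∈ Finset.range k, b i) * b k
        = (∏ i ∈ Finset.range k, a i - ∏ i ∈ Finset.range k, b i) * a k
          + (∏ i ∈ Finset.range k, b i) * (a k - b k) := by ring
    rw [key]
    have step : |(∏ i ∈ Finset.range k, a i - ∏ i ∈ Finset.range k, b i) * a k|
          + |(∏ i ∈ Finset.range k, b i) * (a k - b k)|
        ≤ (k * ε * M ^ (k - 1)) * M + M ^ k * ε := by
      refine add_le_add ?_ ?_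
      · rw [abs_mul]
        exact mul_le_mul h1 (ha k (by omega)) (abs_nonneg _)
          (mul_nonneg (mul_nonneg (by positivity) hε) (by positivity))
      · rw [abs_mul]
        exact mul_le_mul hbk (hab k (by omega)) (abs_nonneg _) (by positivity)
    refine (abs_add_le _ _).trans (step.trans ?_)
    have hMk : (k : ℝ) * ε * M ^ (k - 1) * M ≤ k * ε * M ^ k := by
      rcases Nat.eq_zero_or_pos k with h | h
      · simp [h]
      · rw [mul_assoc, ← pow_succ, show k - 1 + 1 = k from by omega]
    calc (k : ℝ) * ε * M ^ (k - 1) * M + M ^ k * ε ≤ k * ε * M ^ k + M ^ k * ε := by linarith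
      _ = (k + 1 : ℕ) * ε * M ^ k := by push_cast; ring
      _ = (k + 1 : ℕ) * ε * M ^ (k + 1 - 1) := by norm_num
lemma key_est (n : ℕ) (hn : 1 ≤ n) (t : ℝ) (ht : 1 ≤ t) :
    |(((⌊t⌋₊ + 1).choose n : ℝ)) - t ^ n / n.factorial| ≤
      (n : ℝ) ^ 2 * (2 * t) ^ (n - 1) / n.factorial := by
  set m := ⌊t⌋₊ with hm
  have ht0 : (0 : ℝ) ≤ t := by linarith
  have hmt : (m : ℝ) ≤ t := Nat.floor_le ht0
  have htm : t < m + 1 := Nat.lt_floor_add_one t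
  have hfac : (0 : ℝ) < n.factorial := by exact_mod_cast n.factorial_pos
  have hprod : ((n.factorial : ℝ)) * ((m + 1).choose n : ℝ)
      = ∏ i ∈ Finset.range n, ((m + 1 - i : ℕ) : ℝ) := by
    rw [← Nat.cast_prod, ← Nat.descFactorial_eq_prod_range,
      Nat.descFactorial_eq_factorial_mul_choose]
    push_cast; ring
  have hai_le : ∀ i : ℕ, ((m + 1 - i : ℕ) : ℝ) ≤ (m : ℝ) + 1 := by
    intro i
    have h := Nat.sub_le (m + 1) i
    calc ((m + 1 - i : ℕ) : ℝ) ≤ ((m + 1 : ℕ) : ℝ) := by exact_mod_cast h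
      _ = (m : ℝ) + 1 := by push_cast; ring
  have hai_ge : ∀ i : ℕ, (m : ℝ) + 1 - i ≤ ((m + 1 - i : ℕ) : ℝ) := by
    intro i
    rcases le_or_gt i (m + 1) with h | h
    · rw [Nat.cast_sub h]; push_cast; exact le_rfl
    · have h0 : m + 1 - i = 0 := Nat.sub_eq_zero_of_le (le_of_lt h)
      rw [h0]
      have hi : (m : ℝ) + 1 ≤ i := by exact_mod_cast h.le
      simp only [Nat.cast_zero]
      linarith
  have hbound : |(∏ i ∈ Finset.range n, ((m + 1 - i : ℕ) : ℝ)) - t ^ n|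
      ≤ (n : ℝ) ^ 2 * (2 * t) ^ (n - 1) := by
    have h := prod_sub_prod_le (2 * t) n (by linarith) (by positivity) n
      (fun i => ((m + 1 - i : ℕ) : ℝ)) (fun _ => t)
      (fun i _ => by
        rw [abs_of_nonneg (by positivity)]
        have := hai_le i
        linarith)
      (fun i _ => by rw [abs_of_nonneg ht0]; linarith)
      (fun i hi => by
        rw [abs_le]
        constructor
        · have h1 := hai_ge i
          have : (i : ℝ) ≤ n - 1 := by
            have : (i : ℝ) + 1 ≤ n := by exact_mod_cast hi
            linarith
          linarith
        · have h2 := hai_le i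
          have : (1 : ℝ) ≤ n := by exact_mod_cast hn
          linarith)
    simp only [Finset.prod_const, Finset.card_range] at h
    calc |(∏ i ∈ Finset.range n, ((m + 1 - i : ℕ) : ℝ)) - t ^ n|
        ≤ (n : ℝ) * n * (2 * t) ^ (n - 1) := h
      _ = (n : ℝ) ^ 2 * (2 * t) ^ (n - 1) := by ring
  have hrw : (((m + 1)).choose n : ℝ) - t ^ n / n.factorial
      = ((n.factorial : ℝ) * ((m + 1).choose n : ℝ) - t ^ n) / n.factorial := by
    field_simp
  rw [hrw, abs_div, abs_of_pos hfac, hprod]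
  gcongr

/-- For `n ≥ 2`:
`∑_{q=1}^{⌊x⌋} C(q+n-2,n-2) ∑_{p=1}^{⌊x/q⌋} C(p,n-1)
  = ((1/n!) ∑_{q=1}^{⌊x⌋} q^{-n} C(q+n-2,n-2)) x^n + O(x^{n-1} log x)`. -/
theorem f2_sum_asymptotic (n : ℕ) (hn : 2 ≤ n) :
    ∃ C : ℝ, 0 < C ∧ ∃ x₀ : ℝ, 1 < x₀ ∧ ∀ x : ℝ, x₀ ≤ x →
      |(∑ q ∈ Finset.Icc 1 ⌊x⌋₊, ((q + n - 2).choose (n - 2) : ℝ) *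
            ∑ p ∈ Finset.Icc 1 ⌊x / (q : ℝ)⌋₊, (p.choose (n - 1) : ℝ)) -
          (1 / (Nat.factorial n : ℝ) *
            ∑ q ∈ Finset.Icc 1 ⌊x⌋₊, ((q + n - 2).choose (n - 2) : ℝ) / (q : ℝ) ^ n) * x ^ n| ≤
        C * x ^ (n - 1) * Real.log x := by
  obtain ⟨k, rfl⟩ : ∃ k, n = k + 2 := ⟨n - 2, by omega⟩
  simp only [show k + 2 - 2 = k from rfl, show k + 2 - 1 = k + 1 from rfl,
    show ∀ q : ℕ, q + (k + 2) - 2 = q + k from fun q => by omega]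
  set F : ℝ := ((k + 2).factorial : ℝ) with hF
  have hF1 : (1 : ℝ) ≤ F := by
    rw [hF]
    exact_mod_cast (k + 2).factorial_pos
  set A : ℝ := ((k : ℝ) + 2) ^ 2 * 2 ^ (k + 1) * ((k : ℝ) + 1) ^ k with hA
  have hA0 : (0 : ℝ) < A := by positivity
  refine ⟨2 * A + 1, by positivity, 3, by norm_num, fun x hx => ?_⟩
  have hx1 : (1 : ℝ) ≤ x := by linarith
  have hx0 : (0 : ℝ) < x := by linarith
  have hlog : 1 ≤ Real.log x := by
    rw [Real.le_log_iff_exp_le hx0]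
    have := Real.exp_one_lt_d9
    linarith
  have hmain : (1 / F * ∑ q ∈ Finset.Icc 1 ⌊x⌋₊, ((q + k).choose k : ℝ) / (q : ℝ) ^ (k + 2))
        * x ^ (k + 2)
      = ∑ q ∈ Finset.Icc 1 ⌊x⌋₊, ((q + k).choose k : ℝ) * ((x / q) ^ (k + 2) / F) := by
    rw [Finset.mul_sum, Finset.sum_mul]
    refine Finset.sum_congr rfl fun q hq => ?_
    have hq1 := (Finset.mem_Icc.mp hq).1
    rw [div_pow]
    ring
  have hdiff : (∑ q ∈ Finset.Icc 1 ⌊x⌋₊, ((q + k).choose k : ℝ) *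
          ∑ p ∈ Finset.Icc 1 ⌊x / (q : ℝ)⌋₊, (p.choose (k + 1) : ℝ)) -
        (1 / F * ∑ q ∈ Finset.Icc 1 ⌊x⌋₊, ((q + k).choose k : ℝ) / (q : ℝ) ^ (k + 2))
          * x ^ (k + 2)
      = ∑ q ∈ Finset.Icc 1 ⌊x⌋₊, ((q + k).choose k : ℝ) *
          (((⌊x / (q : ℝ)⌋₊ + 1).choose (k + 2) : ℝ) - (x / q) ^ (k + 2) / F) := by
    rw [hmain, ← Finset.sum_sub_distrib]
    refine Finset.sum_congr rfl fun q hq => ?_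
    rw [mul_sub]
    congr 1
    rw [← Nat.cast_sum, hockey]
  rw [hdiff]
  have hperq : ∀ q ∈ Finset.Icc 1 ⌊x⌋₊,
      |((q + k).choose k : ℝ) *
          (((⌊x / (q : ℝ)⌋₊ + 1).choose (k + 2) : ℝ) - (x / q) ^ (k + 2) / F)|
        ≤ A * x ^ (k + 1) * (q : ℝ)⁻¹ := by
    intro q hq
    obtain ⟨hq1, hq2⟩ := Finset.mem_Icc.mp hq
    have hq0 : (0 : ℝ) < q := by exact_mod_cast hq1
    have hqx : (q : ℝ) ≤ x := le_trans (by exact_mod_cast hq2) (Nat.floor_le hx0.le)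
    have ht : (1 : ℝ) ≤ x / q := (one_le_div hq0).mpr hqx
    have hkey := key_est (k + 2) (by omega) (x / q) ht
    simp only [show k + 2 - 1 = k + 1 from rfl] at hkey
    have hc : ((q + k).choose k : ℝ) ≤ ((k : ℝ) + 1) ^ k * (q : ℝ) ^ k := by
      have h1 : (q + k).choose k ≤ ((k + 1) * q) ^ k := by
        calc (q + k).choose k ≤ (q + k).descFactorial k := by
              rw [Nat.descFactorial_eq_factorial_mul_choose]
              exact Nat.le_mul_of_pos_left _ (Nat.factorial_pos k)
          _ ≤ (q + k) ^ k := Nat.descFactorial_le_pow _ _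
          _ ≤ ((k + 1) * q) ^ k := Nat.pow_le_pow_left (by nlinarith) k
      calc ((q + k).choose k : ℝ) ≤ ((((k + 1) * q) ^ k : ℕ) : ℝ) := by exact_mod_cast h1
        _ = ((k : ℝ) + 1) ^ k * (q : ℝ) ^ k := by push_cast; rw [mul_pow]
    rw [abs_mul, abs_of_nonneg (by positivity : (0:ℝ) ≤ ((q + k).choose k : ℝ))]
    calc ((q + k).choose k : ℝ) *
          |((⌊x / (q : ℝ)⌋₊ + 1).choose (k + 2) : ℝ) - (x / q) ^ (k + 2) / F|
        ≤ ((q + k).choose k : ℝ) *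
            (((k : ℝ) + 2) ^ 2 * (2 * (x / q)) ^ (k + 1) / F) := by
          refine mul_le_mul_of_nonneg_left ?_ (by positivity)
          convert hkey using 3 <;> push_cast <;> rfl
      _ ≤ (((k : ℝ) + 1) ^ k * (q : ℝ) ^ k) *
            (((k : ℝ) + 2) ^ 2 * (2 * (x / q)) ^ (k + 1)) := by
          refine mul_le_mul hc (div_le_self (by positivity) hF1) (by positivity) (by positivity)
      _ = A * x ^ (k + 1) * (q : ℝ)⁻¹ := by
          rw [mul_pow, div_pow, hA]
          field_simp [ne_of_gt hq0]
          ring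
  have hharm : ∑ q ∈ Finset.Icc 1 ⌊x⌋₊, ((q : ℝ))⁻¹ ≤ 1 + Real.log ⌊x⌋₊ := by
    have h1 := harmonic_le_one_add_log ⌊x⌋₊
    have h2 : ((harmonic ⌊x⌋₊ : ℚ) : ℝ) = ∑ q ∈ Finset.Icc 1 ⌊x⌋₊, ((q : ℝ))⁻¹ := by
      rw [harmonic_eq_sum_Icc]
      push_cast
      rfl
    linarith [h2 ▸ h1]
  have hlogM : Real.log ⌊x⌋₊ ≤ Real.log x := by
    have hM1 : (1 : ℝ) ≤ (⌊x⌋₊ : ℝ) := by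
      exact_mod_cast Nat.one_le_iff_ne_zero.mpr (by
        have : 0 < ⌊x⌋₊ := Nat.floor_pos.mpr hx1
        omega)
    exact Real.log_le_log (by linarith) (Nat.floor_le hx0.le)
  calc |∑ q ∈ Finset.Icc 1 ⌊x⌋₊, ((q + k).choose k : ℝ) *
          (((⌊x / (q : ℝ)⌋₊ + 1).choose (k + 2) : ℝ) - (x / q) ^ (k + 2) / F)|
      ≤ ∑ q ∈ Finset.Icc 1 ⌊x⌋₊, |((q + k).choose k : ℝ) *
          (((⌊x / (q : ℝ)⌋₊ + 1).choose (k + 2) : ℝ) - (x / q) ^ (k + 2) / F)| :=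
        Finset.abs_sum_le_sum_abs _ _
    _ ≤ ∑ q ∈ Finset.Icc 1 ⌊x⌋₊, A * x ^ (k + 1) * (q : ℝ)⁻¹ := Finset.sum_le_sum hperq
    _ = A * x ^ (k + 1) * ∑ q ∈ Finset.Icc 1 ⌊x⌋₊, ((q : ℝ))⁻¹ := by rw [← Finset.mul_sum]
    _ ≤ A * x ^ (k + 1) * (1 + Real.log x) := by
        refine mul_le_mul_of_nonneg_left ?_ (by positivity)
        linarith
    _ ≤ (2 * A + 1) * x ^ (k + 1) * Real.log x := by
        have hxp : (0 : ℝ) < x ^ (k + 1) := by positivity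
        nlinarith [mul_pos hA0 hxp]
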